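/- arXiv:1804.00205 — 2 statements merged into one kernel-verified Lean document; each statement's English description precedes it below -/
import Mathlib

section
/- Let p > 1 and q = p/(p−1). Then the Young transform (convex conjugate) of φ_p equals φ_q; that is, for every y ∈ ℝ, sup_{x ∈ ℝ} (x·y − φ_p(x)) = φ_q(y). -/
/-- The standardization `φ_p` of `|x|^p`: `φ_p(x) = x²/2` for `|x| ≤ 1` and
`φ_p(x) = |x|^p/p - 1/p + 1/2` for `|x| > 1`. -/
noncomputable def phi (p : ℝ) (x : ℝ) : ℝ :=
  if |x| ≤ 1 then x ^ 2 / 2 else |x| ^ p / p - 1 / p + 1 / 2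

-- Bernoulli consequence: for t ≥ 1, r > 1: t^r/r - 1/r ≥ t - 1
lemma bern {t r : ℝ} (ht : 1 ≤ t) (hr : 1 < r) : t - 1 ≤ t ^ r / r - 1 / r := by
  have h := one_add_mul_self_le_rpow_one_add (s := t - 1) (by linarith) hr.le
  have hr0 : 0 < r := by linarith
  rw [show (1 : ℝ) + (t - 1) = t by ring] at h
  rw [div_sub_div_same, le_div_iff₀ hr0]
  nlinarith

lemma key (p : ℝ) (hp : 1 < p) (x y : ℝ) :
    x * y - phi p x ≤ phi (p / (p - 1)) y := by
  set q := p / (p - 1) with hq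
  have hp1 : 0 < p - 1 := by linarith
  have hp0 : 0 < p := by linarith
  have hq1 : 1 < q := by rw [hq, lt_div_iff₀ hp1]; linarith
  have hq0 : 0 < q := by linarith
  have hpq : 1 / p + 1 / q = 1 := by rw [hq]; field_simp; ring
  have hxy : x * y ≤ |x| * |y| := (le_abs_self _).trans (abs_mul x y).le
  unfold phi
  split_ifs with hx hy hy
  · nlinarith [sq_nonneg (x - y), sq_abs x, sq_abs y]
  · push_neg at hy
    have hb := bern (t := |y|) hy.le hq1
    have hax : 0 ≤ 1 - |x| := by linarith
    nlinarith [sq_abs x, mul_nonneg hax (by linarith : (0:ℝ) ≤ 2 * |y| - |x| - 1)]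
  · push_neg at hx
    have hb := bern (t := |x|) hx.le hp
    have hay : 0 ≤ 1 - |y| := by linarith
    nlinarith [sq_abs y, mul_nonneg hay (by linarith : (0:ℝ) ≤ 2 * |x| - |y| - 1)]
  · have hconj : p.HolderConjugate q := Real.HolderConjugate.conjExponent hp
    have := Real.young_inequality x y hconj
    have h1 : (1:ℝ)/p = 1 - 1/q := by linarith
    linarith


/-- For `p > 1` and `q = p/(p-1)`, the Young transform (convex conjugate)
of `φ_p` is `φ_q`: for every `y`, `sup_x (x·y - φ_p(x)) = φ_q(y)`. -/
theorem phi_young_conjugate (p : ℝ) (hp : 1 < p) (y : ℝ) :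
    (⨆ x : ℝ, x * y - phi p x) = phi (p / (p - 1)) y := by
  set q := p / (p - 1) with hq
  have hp1 : 0 < p - 1 := by linarith
  have hp0 : 0 < p := by linarith
  have hq1 : 1 < q := by rw [hq, lt_div_iff₀ hp1]; linarith
  have hq0 : 0 < q := by linarith
  have hpq : 1 / p + 1 / q = 1 := by rw [hq]; field_simp; ring
  have hbdd : BddAbove (Set.range fun x : ℝ => x * y - phi p x) := by
    refine ⟨phi q y, ?_⟩
    rintro _ ⟨x, rfl⟩
    exact key p hp x y
  apply le_antisymm
  · exact ciSup_le fun x => key p hp x y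
  · rcases le_or_gt |y| 1 with hy | hy
    · refine le_ciSup_of_le hbdd y ?_
      rw [phi, phi, if_pos hy, if_pos hy]
      ring_nf
      nlinarith [sq_abs y]
    · -- witness x₀ = y * |y|^(q-2)
      set x₀ := y * |y| ^ (q - 2) with hx₀
      have hy0 : 0 < |y| := by linarith
      have habs : |x₀| = |y| ^ (q - 1) := by
        calc |x₀| = |y| * |y| ^ (q - 2) := by
              rw [hx₀, abs_mul, abs_of_pos (Real.rpow_pos_of_pos hy0 _)]
          _ = |y| ^ (1:ℝ) * |y| ^ (q - 2) := by rw [Real.rpow_one]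
          _ = |y| ^ (1 + (q - 2)) := (Real.rpow_add hy0 _ _).symm
          _ = |y| ^ (q - 1) := by ring_nf
      have hx1 : 1 < |x₀| := by
        rw [habs]
        exact (Real.one_lt_rpow_iff_of_pos hy0).2 (Or.inl ⟨hy, by linarith⟩)
      have hqp : (q - 1) * p = q := by rw [hq]; field_simp; ring
      have hxp : |x₀| ^ p = |y| ^ q := by
        rw [habs, ← Real.rpow_mul hy0.le, hqp]
      have hx0y : x₀ * y = |y| ^ q := by
        calc x₀ * y = |y| ^ (2:ℝ) * |y| ^ (q - 2) := by
              rw [hx₀, show ((2:ℝ)) = ((2:ℕ):ℝ) by norm_num, Real.rpow_natCast, sq_abs]; ring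
          _ = |y| ^ (2 + (q - 2)) := (Real.rpow_add hy0 _ _).symm
          _ = |y| ^ q := by ring_nf
      refine le_ciSup_of_le hbdd x₀ ?_
      rw [phi, phi, if_neg (not_le.2 hx1), if_neg (not_le.2 hy), hxp, hx0y]
      have hA : |y| ^ q * (1/p) + |y| ^ q * (1/q) = |y| ^ q := by
        rw [← mul_add, hpq, mul_one]
      have h1 : (1:ℝ)/p = 1 - 1/q := by linarith
      have e1 : |y| ^ q / p = |y| ^ q * (1/p) := by ring
      have e2 : |y| ^ q / q = |y| ^ q * (1/q) := by ring
      rw [e1, e2]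
      linarith
end

section
/- Let p > 1, q = p/(p−1) and r = min{2, q}. If ξ_1, …, ξ_n are independent, mean-zero random variables with τ_{φ_p}(ξ_i) < ∞ for each i, then τ_{φ_p}(∑_{i=1}^n ξ_i)^r ≤ ∑_{i=1}^n τ_{φ_p}(ξ_i)^r. -/
open MeasureTheory ENNReal Real

/-- `τ_{φ_p}(X) = inf{K > 0 : ∀ t, E exp(tX) ≤ exp(φ_q(Kt))}` where `q = p/(p-1)`
(with value `∞` if no such `K` exists). -/
noncomputable def tauNorm {Ω : Type*} [MeasurableSpace Ω] (μ : Measure Ω) (p : ℝ)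
    (X : Ω → ℝ) : ℝ≥0∞ :=
  ⨅ (K : ℝ) (_ : 0 < K)
    (_ : ∀ t : ℝ, ∫⁻ ω, ENNReal.ofReal (Real.exp (t * X ω)) ∂μ ≤
      ENNReal.ofReal (Real.exp (phi (p / (p - 1)) (K * t)))), ENNReal.ofReal K

lemma phi_zero (q : ℝ) : phi q 0 = 0 := by simp [phi]

lemma phi_of_le_one {q x : ℝ} (hx : 0 ≤ x) (h1 : x ≤ 1) : phi q x = x ^ 2 / 2 := by
  rw [phi, if_pos (by rw [abs_of_nonneg hx]; exact h1)]

lemma phi_of_one_lt {q x : ℝ} (hx : 0 ≤ x) (h1 : 1 < x) :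
    phi q x = x ^ q / q - 1 / q + 1 / 2 := by
  rw [phi, if_neg (by rw [abs_of_nonneg hx]; exact not_le.2 h1), abs_of_nonneg hx]

lemma phi_abs (q x : ℝ) : phi q |x| = phi q x := by
  simp [phi, abs_abs, sq_abs]

lemma phi_nonneg {q x : ℝ} (hq : 0 < q) : 0 ≤ phi q x := by
  rw [phi]
  split_ifs with h
  · positivity
  · push_neg at h
    have h1 : (1:ℝ) ≤ |x| ^ q := Real.one_le_rpow h.le hq.le
    have : 0 < 1/q := by positivity
    have hle : 1/q ≤ |x| ^ q / q := by
      apply div_le_div_of_nonneg_right <;> first | exact hq | linarith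
    linarith

/-- Bernoulli-type: `(s+t)^β ≥ s^β + β s^(β-1) t`. -/
lemma bern_add {β s t : ℝ} (hβ : 1 ≤ β) (hs : 0 < s) (ht : 0 ≤ t) :
    s ^ β + β * s ^ (β - 1) * t ≤ (s + t) ^ β := by
  have hts : -1 ≤ t / s := by
    have : (0:ℝ) ≤ t / s := by positivity
    linarith
  have h := one_add_mul_self_le_rpow_one_add hts hβ
  have hst : s + t = s * (1 + t/s) := by field_simp
  have h1 : (s + t) ^ β = s ^ β * (1 + t/s) ^ β := by
    rw [hst, Real.mul_rpow hs.le (by positivity)]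
  have h2 : s ^ β * (1 + β * (t/s)) ≤ s ^ β * (1 + t/s) ^ β :=
    mul_le_mul_of_nonneg_left h (Real.rpow_nonneg hs.le β)
  have h3 : s ^ (β - 1) = s ^ β / s := by
    rw [Real.rpow_sub hs, Real.rpow_one]
  rw [h1]
  calc s ^ β + β * s ^ (β - 1) * t = s ^ β * (1 + β * (t/s)) := by
        rw [h3]; field_simp
    _ ≤ _ := h2

lemma rpow_superadd {β x y : ℝ} (hβ : 1 ≤ β) (hx : 0 ≤ x) (hy : 0 ≤ y) :
    x ^ β + y ^ β ≤ (x + y) ^ β := by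
  wlog hxy : x ≤ y generalizing x y
  · rw [add_comm (x ^ β), add_comm x]; exact this hy hx (le_of_not_ge hxy)
  rcases eq_or_lt_of_le hx with h0 | hx0
  · simp only [← h0, add_zero, zero_add]
    rw [Real.zero_rpow (by linarith)]
    linarith
  have h := bern_add hβ (lt_of_lt_of_le hx0 hxy) hx
  have h2 : x ^ β ≤ β * y ^ (β - 1) * x := by
    have hxb : x ^ β = x ^ (β - 1) * x := by
      rw [← Real.rpow_add_one hx0.ne' (β - 1)]; ring_nf
    rw [hxb]
    have : x ^ (β - 1) ≤ y ^ (β - 1) := Real.rpow_le_rpow hx hxy (by linarith)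
    nlinarith [Real.rpow_nonneg hy (β - 1), mul_le_mul_of_nonneg_right this hx,
      mul_nonneg (mul_nonneg (by linarith : (0:ℝ) ≤ β - 1) (Real.rpow_nonneg hy (β - 1))) hx]
  have : x + y = y + x := add_comm _ _
  rw [this]
  nlinarith

lemma B4aux {β u v : ℝ} (hβ : 1 ≤ β) (hu : 1 ≤ u) (huv : u ≤ v) :
    u ^ β + v ^ β + (β - 1) ≤ (u + v) ^ β := by
  have hv : (1:ℝ) ≤ v := le_trans hu huv
  have hu0 : (0:ℝ) < u := by linarith
  have hv0 : (0:ℝ) < v := by linarith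
  have hb := bern_add hβ hv0 hu0.le
  have h1 : u ^ β = u ^ (β - 1) * u := by
    rw [← Real.rpow_add_one hu0.ne' (β - 1)]; ring_nf
  have h2 : u ^ (β - 1) ≤ v ^ (β - 1) := Real.rpow_le_rpow hu0.le huv (by linarith)
  have h3 : (1:ℝ) ≤ v ^ (β - 1) := Real.one_le_rpow hv (by linarith)
  have h4 : (1:ℝ) ≤ v ^ (β - 1) * u := by nlinarith
  have h5 : u ^ (β - 1) * u ≤ v ^ (β - 1) * u := by nlinarith
  have h6 : v ^ (β - 1) * u + (β - 1) ≤ β * v ^ (β - 1) * u := by nlinarith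
  have h7 : (u + v) ^ β = (v + u) ^ β := by rw [add_comm]
  linarith

lemma phi_superadd {q r x y c : ℝ} (hq : 1 < q) (hrr : r = min 2 q)
    (hx : 0 ≤ x) (hy : 0 ≤ y) (hc : 0 ≤ c) (h : x ^ r + y ^ r = c ^ r) :
    phi q x + phi q y ≤ phi q c := by
  have hq0 : (0:ℝ) < q := by linarith
  have hr0 : (0:ℝ) < r := by rw [hrr]; exact lt_min two_pos hq0
  wlog hxy : x ≤ y generalizing x y
  · rw [add_comm (phi q x)]
    exact this hy hx (by linarith [h]; ) (le_of_not_ge hxy)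
  have hxc : x ≤ c := by
    by_contra hlt
    push_neg at hlt
    have := Real.rpow_lt_rpow hc hlt hr0
    nlinarith [Real.rpow_nonneg hy r]
  have hyc : y ≤ c := by
    by_contra hlt
    push_neg at hlt
    have := Real.rpow_lt_rpow hc hlt hr0
    nlinarith [Real.rpow_nonneg hx r]
  rcases le_total q 2 with hq2 | hq2
  · -- Case A : r = q
    have hrq : r = q := by rw [hrr, min_eq_right hq2]
    subst hrq
    rcases le_or_gt c 1 with hc1 | hc1
    · -- A1
      have hx1 : x ≤ 1 := le_trans hxc hc1
      have hy1 : y ≤ 1 := le_trans hyc hc1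
      rw [phi_of_le_one hx hx1, phi_of_le_one hy hy1, phi_of_le_one hc hc1]
      have key : (x ^ r) ^ (2/r) + (y ^ r) ^ (2/r) ≤ (x ^ r + y ^ r) ^ (2/r) :=
        rpow_superadd (by rw [le_div_iff₀ hr0]; linarith) (Real.rpow_nonneg hx r)
          (Real.rpow_nonneg hy r)
      have e : ∀ z : ℝ, 0 ≤ z → (z ^ r) ^ (2/r) = z ^ 2 := by
        intro z hz
        rw [← Real.rpow_mul hz, mul_div_cancel₀ _ hr0.ne', ← Real.rpow_natCast z 2]
        norm_num
      rw [e x hx, e y hy, h, e c hc] at key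
      linarith
    · -- c > 1
      rw [phi_of_one_lt hc hc1]
      have hcq1 : (1:ℝ) < c ^ r := Real.one_lt_rpow_iff_of_pos (by linarith) |>.2 (Or.inl ⟨hc1, hr0⟩)
      have hhalf : 1/2 ≤ 1/r := by
        apply div_le_div_of_nonneg_left <;> linarith
      rcases le_or_gt y 1 with hy1 | hy1
      · -- A2 : x ≤ y ≤ 1 < c
        have hx1 : x ≤ 1 := le_trans hxy hy1
        rw [phi_of_le_one hx hx1, phi_of_le_one hy hy1]
        have ex : x ^ 2 ≤ x ^ r := by
          rcases eq_or_lt_of_le hx with h0 | h0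
          · rw [← h0, Real.zero_rpow hr0.ne']; norm_num
          · rw [← Real.rpow_natCast x 2]
            exact Real.rpow_le_rpow_of_exponent_ge h0 hx1 (by norm_num; linarith)
        have ey : y ^ 2 ≤ y ^ r := by
          rcases eq_or_lt_of_le hy with h0 | h0
          · rw [← h0, Real.zero_rpow hr0.ne']; norm_num
          · rw [← Real.rpow_natCast y 2]
            exact Real.rpow_le_rpow_of_exponent_ge h0 hy1 (by norm_num; linarith)
        have h2 : (c ^ r - 1)/2 ≤ (c ^ r - 1)/r := by
          apply div_le_div_of_nonneg_left <;> linarith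
        have h3 : c ^ r / r - 1/r = (c ^ r - 1)/r := by ring
        linarith
      · -- y > 1
        rw [phi_of_one_lt hy hy1]
        rcases le_or_gt x 1 with hx1 | hx1
        · -- A3
          rw [phi_of_le_one hx hx1]
          have ex : x ^ 2 ≤ x ^ r := by
            rcases eq_or_lt_of_le hx with h0 | h0
            · rw [← h0, Real.zero_rpow hr0.ne']; norm_num
            · rw [← Real.rpow_natCast x 2]
              exact Real.rpow_le_rpow_of_exponent_ge h0 hx1 (by norm_num; linarith)
          have h2 : x ^ r / 2 ≤ x ^ r / r := by
            apply div_le_div_of_nonneg_left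
            · exact Real.rpow_nonneg hx r
            · linarith
            · linarith
          have h3 : c ^ r / r = x ^ r / r + y ^ r / r := by rw [← h]; ring
          linarith
        · -- A4
          rw [phi_of_one_lt hx hx1]
          have h3 : c ^ r / r = x ^ r / r + y ^ r / r := by rw [← h]; ring
          linarith
  · -- Case B : r = 2, q ≥ 2
    have hrq : r = 2 := by rw [hrr, min_eq_left hq2]
    subst hrq
    have hβ : (1:ℝ) ≤ q / 2 := by linarith
    have e2 : ∀ z : ℝ, 0 ≤ z → z ^ (2:ℝ) = z ^ 2 := by
      intro z hz
      rw [← Real.rpow_natCast z 2]; norm_num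
    rw [e2 x hx, e2 y hy, e2 c hc] at h
    have eq2 : ∀ z : ℝ, 0 ≤ z → (z ^ 2) ^ (q/2) = z ^ q := by
      intro z hz
      rw [← e2 z hz, ← Real.rpow_mul hz, show (2:ℝ) * (q/2) = q by ring]
    rcases le_or_gt c 1 with hc1 | hc1
    · have hx1 : x ≤ 1 := le_trans hxc hc1
      have hy1 : y ≤ 1 := le_trans hyc hc1
      rw [phi_of_le_one hx hx1, phi_of_le_one hy hy1, phi_of_le_one hc hc1]
      linarith
    · rw [phi_of_one_lt hc hc1]
      have hc2 : (1:ℝ) < c ^ 2 := by nlinarith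
      rcases le_or_gt y 1 with hy1 | hy1
      · -- B2
        have hx1 : x ≤ 1 := le_trans hxy hy1
        rw [phi_of_le_one hx hx1, phi_of_le_one hy hy1]
        have hb := one_add_mul_self_le_rpow_one_add
          (show (-1:ℝ) ≤ c ^ 2 - 1 by nlinarith) hβ
        rw [show (1:ℝ) + (c ^ 2 - 1) = c ^ 2 by ring] at hb
        rw [eq2 c hc] at hb
        -- hb : 1 + q/2 * (c^2 - 1) ≤ c ^ q
        have h4 : (1 + q/2 * (c^2 - 1))/q ≤ c ^ q / q := by
          apply div_le_div_of_nonneg_right hb hq0.le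
        have h5 : (1 + q/2 * (c^2 - 1))/q = 1/q + (c^2 - 1)/2 := by
          field_simp
        linarith
      · -- y > 1
        rw [phi_of_one_lt hy hy1]
        rcases le_or_gt x 1 with hx1 | hx1
        · -- B3
          rw [phi_of_le_one hx hx1]
          have hy2 : (1:ℝ) ≤ y ^ 2 := by nlinarith
          have hb := bern_add hβ (show (0:ℝ) < y^2 by nlinarith) (show (0:ℝ) ≤ x^2 by positivity)
          have hyβ : (1:ℝ) ≤ (y ^ 2 : ℝ) ^ (q/2 - 1) := Real.one_le_rpow hy2 (by linarith)
          have hc2e : (c:ℝ)^2 = y^2 + x^2 := by linarith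
          have hkey : y ^ q + q/2 * x^2 ≤ c ^ q := by
            rw [← eq2 c hc, hc2e, ← eq2 y hy]
            have h6 : q/2 * 1 * x^2 ≤ q/2 * (y^2:ℝ)^(q/2-1) * x^2 := by
              apply mul_le_mul_of_nonneg_right _ (by positivity)
              exact mul_le_mul_of_nonneg_left hyβ (by linarith)
            linarith
          have h4 : (y ^ q + q/2 * x^2)/q ≤ c ^ q / q :=
            div_le_div_of_nonneg_right hkey hq0.le
          have h5 : (y ^ q + q/2 * x^2)/q = y^q/q + x^2/2 := by field_simp
          linarith
        · -- B4
          rw [phi_of_one_lt hx hx1]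
          have hu : (1:ℝ) ≤ x ^ 2 := by nlinarith
          have huv : x ^ 2 ≤ y ^ 2 := by nlinarith
          have hkey : x ^ q + y ^ q + (q/2 - 1) ≤ c ^ q := by
            rw [← eq2 c hc, show (c:ℝ)^2 = x^2 + y^2 by linarith, ← eq2 y hy, ← eq2 x hx]
            have := B4aux hβ hu huv
            linarith
          have h4 := div_le_div_of_nonneg_right hkey hq0.le
          have h5 : (x ^ q + y ^ q + (q/2 - 1))/q = x^q/q + y^q/q + (1/2 - 1/q) := by
            field_simp
          linarith

lemma phi_rpow_sum_le {q r : ℝ} (hq : 1 < q) (hrr : r = min 2 q) {ι : Type*} (s : Finset ι)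
    (u : ι → ℝ) (hu : ∀ i ∈ s, 0 ≤ u i) :
    ∑ i ∈ s, phi q (u i ^ (1/r)) ≤ phi q ((∑ i ∈ s, u i) ^ (1/r)) := by
  classical
  have hr0 : (0:ℝ) < r := by rw [hrr]; exact lt_min two_pos (by linarith)
  induction s using Finset.induction_on with
  | empty =>
    rw [Finset.sum_empty, Finset.sum_empty, Real.zero_rpow (by positivity : (1/r) ≠ 0), phi_zero]
  | @insert a s ha ih =>
    rw [Finset.sum_insert ha, Finset.sum_insert ha]
    have hua : 0 ≤ u a := hu a (Finset.mem_insert_self a s)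
    have hus : ∀ i ∈ s, 0 ≤ u i := fun i hi => hu i (Finset.mem_insert_of_mem hi)
    have hsum : 0 ≤ ∑ i ∈ s, u i := Finset.sum_nonneg hus
    have h1 := ih hus
    have h2 : phi q (u a ^ (1/r)) + phi q ((∑ i ∈ s, u i) ^ (1/r)) ≤
        phi q ((u a + ∑ i ∈ s, u i) ^ (1/r)) := by
      apply phi_superadd hq hrr (Real.rpow_nonneg hua _) (Real.rpow_nonneg hsum _)
        (Real.rpow_nonneg (by linarith) _)
      rw [one_div, Real.rpow_inv_rpow hua hr0.ne', Real.rpow_inv_rpow hsum hr0.ne',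
        Real.rpow_inv_rpow (by linarith) hr0.ne']
    linarith

lemma phi_sum_le {q r : ℝ} (hq : 1 < q) (hrr : r = min 2 q) {n : ℕ} (a : Fin n → ℝ)
    (ha : ∀ i, 0 ≤ a i) {c : ℝ} (hc : 0 ≤ c) (h : ∑ i, a i ^ r = c ^ r) :
    ∑ i, phi q (a i) ≤ phi q c := by
  have hr0 : (0:ℝ) < r := by rw [hrr]; exact lt_min two_pos (by linarith)
  have := phi_rpow_sum_le hq hrr Finset.univ (fun i => a i ^ r)
    (fun i _ => Real.rpow_nonneg (ha i) r)
  simp only [h] at this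
  rwa [one_div, Real.rpow_rpow_inv hc hr0.ne',
    (by funext i; exact congrArg (phi q) (Real.rpow_rpow_inv (ha i) hr0.ne') :
      (fun i => phi q ((a i ^ r) ^ r⁻¹)) = fun i => phi q (a i))] at this

open ProbabilityTheory in
lemma key_bound {Ω : Type*} [MeasurableSpace Ω] (μ : Measure Ω) [IsProbabilityMeasure μ]
    {q r : ℝ} (hq : 1 < q) (hrr : r = min 2 q) {n : ℕ} (ξ : Fin n → Ω → ℝ)
    (hmeas : ∀ i, Measurable (ξ i))
    (hindep : ProbabilityTheory.iIndepFun ξ μ)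
    (K : Fin n → ℝ) (hK : ∀ i, 0 < K i)
    (hprop : ∀ i, ∀ t : ℝ, ∫⁻ ω, ENNReal.ofReal (Real.exp (t * ξ i ω)) ∂μ ≤
      ENNReal.ofReal (Real.exp (phi q (K i * t)))) (t : ℝ) :
    ∫⁻ ω, ENNReal.ofReal (Real.exp (t * ∑ i, ξ i ω)) ∂μ ≤
      ENNReal.ofReal (Real.exp (phi q ((∑ i, K i ^ r) ^ (1/r) * t))) := by
  have hr0 : (0:ℝ) < r := by rw [hrr]; exact lt_min two_pos (by linarith)
  have hsum : (0:ℝ) ≤ ∑ i, K i ^ r :=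
    Finset.sum_nonneg fun i _ => Real.rpow_nonneg (hK i).le r
  set K0 : ℝ := (∑ i, K i ^ r) ^ (1/r) with hK0
  have hK0n : 0 ≤ K0 := Real.rpow_nonneg hsum _
  have hInt : ∀ i, Integrable (fun ω => Real.exp (t * ξ i ω)) μ := by
    intro i
    refine ⟨(((hmeas i).const_mul t).exp).aestronglyMeasurable, ?_⟩
    rw [hasFiniteIntegral_iff_ofReal (ae_of_all _ fun ω => (Real.exp_pos _).le)]
    exact lt_of_le_of_lt (hprop i t) ofReal_lt_top
  have hSint : Integrable (fun ω => Real.exp (t * (∑ i, ξ i) ω)) μ :=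
    hindep.integrable_exp_mul_sum hmeas (fun i _ => hInt i)
  have happ : ∀ ω : Ω, ∑ i, ξ i ω = (∑ i, ξ i) ω := by simp
  have hmgf : ∀ i, mgf (ξ i) μ t ≤ Real.exp (phi q (K i * t)) := by
    intro i
    have h := hprop i t
    rw [← ofReal_integral_eq_lintegral_ofReal (hInt i)
      (ae_of_all _ fun ω => (Real.exp_pos _).le)] at h
    exact (ENNReal.ofReal_le_ofReal_iff (Real.exp_pos _).le).1 h
  have hphisum : ∑ i, phi q (K i * t) ≤ phi q (K0 * t) := by
    have habs : ∀ c : ℝ, 0 ≤ c → phi q (c * t) = phi q (c * |t|) := by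
      intro c hc
      rw [← phi_abs q (c * t), abs_mul, abs_of_nonneg hc]
    calc ∑ i, phi q (K i * t) = ∑ i, phi q (K i * |t|) := by
          refine Finset.sum_congr rfl fun i _ => habs _ (hK i).le
      _ ≤ phi q (K0 * |t|) := by
          apply phi_sum_le hq hrr _ (fun i => mul_nonneg (hK i).le (abs_nonneg t))
            (mul_nonneg hK0n (abs_nonneg t))
          have : ∀ i : Fin n, (K i * |t|) ^ r = K i ^ r * |t| ^ r := fun i =>
            Real.mul_rpow (hK i).le (abs_nonneg t)
          simp only [this, ← Finset.sum_mul]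
          rw [Real.mul_rpow hK0n (abs_nonneg t), hK0, one_div,
            Real.rpow_inv_rpow hsum hr0.ne']
      _ = phi q (K0 * t) := (habs _ hK0n).symm
  calc ∫⁻ ω, ENNReal.ofReal (Real.exp (t * ∑ i, ξ i ω)) ∂μ
      = ENNReal.ofReal (mgf (∑ i, ξ i) μ t) := by
        simp_rw [happ]
        rw [← ofReal_integral_eq_lintegral_ofReal hSint
          (ae_of_all _ fun ω => (Real.exp_pos _).le)]
        rfl
    _ ≤ ENNReal.ofReal (Real.exp (phi q (K0 * t))) := by
        apply ENNReal.ofReal_le_ofReal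
        rw [hindep.mgf_sum hmeas]
        calc ∏ i, mgf (ξ i) μ t ≤ ∏ i, Real.exp (phi q (K i * t)) :=
              Finset.prod_le_prod (fun i _ => mgf_nonneg) (fun i _ => hmgf i)
          _ = Real.exp (∑ i, phi q (K i * t)) := (Real.exp_sum _ _).symm
          _ ≤ _ := Real.exp_le_exp.2 hphisum

/-- For `p > 1`, `q = p/(p-1)`, `r = min{2, q}` and independent mean-zero
random variables `ξ_1, …, ξ_n` with finite `τ_{φ_p}`-norms,
`τ_{φ_p}(∑ ξ_i)^r ≤ ∑ τ_{φ_p}(ξ_i)^r`. -/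
theorem tauNorm_sum_le {Ω : Type*} [MeasurableSpace Ω] (μ : Measure Ω) [IsProbabilityMeasure μ]
    (p q r : ℝ) (hp : 1 < p) (hq : q = p / (p - 1)) (hr : r = min 2 q)
    (n : ℕ) (ξ : Fin n → Ω → ℝ) (hmeas : ∀ i, Measurable (ξ i))
    (hindep : ProbabilityTheory.iIndepFun ξ μ)
    (hint : ∀ i, Integrable (ξ i) μ) (hmean : ∀ i, ∫ ω, ξ i ω ∂μ = 0)
    (hfin : ∀ i, tauNorm μ p (ξ i) < ⊤) :
    (tauNorm μ p (fun ω => ∑ i, ξ i ω)) ^ r ≤ ∑ i, (tauNorm μ p (ξ i)) ^ r := by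
  subst hq
  have hp1 : (0:ℝ) < p - 1 := by linarith
  have hq1 : 1 < p / (p - 1) := (one_lt_div hp1).2 (by linarith)
  have hr0 : (0:ℝ) < r := by rw [hr]; exact lt_min two_pos (by linarith)
  have hr1 : r ≠ 0 := hr0.ne'
  rcases Nat.eq_zero_or_pos n with hn | hn
  · subst hn
    simp only [Finset.univ_eq_empty, Finset.sum_empty]
    have h0 : tauNorm μ p (fun _ : Ω => (0:ℝ)) = 0 := by
      refine le_antisymm (ENNReal.le_of_forall_pos_le_add fun ε hε _ => ?_) zero_le
      rw [zero_add]
      have hprop : ∀ t : ℝ, ∫⁻ ω, ENNReal.ofReal (Real.exp (t * (0:ℝ))) ∂μ ≤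
          ENNReal.ofReal (Real.exp (phi (p / (p - 1)) ((ε:ℝ) * t))) := by
        intro t
        simp only [mul_zero, Real.exp_zero, ENNReal.ofReal_one, lintegral_one, measure_univ]
        rw [show (1:ℝ≥0∞) = ENNReal.ofReal (Real.exp 0) by simp]
        exact ENNReal.ofReal_le_ofReal (Real.exp_le_exp.2 (phi_nonneg (by linarith)))
      calc tauNorm μ p (fun _ : Ω => (0:ℝ)) ≤ ENNReal.ofReal (ε:ℝ) := by
            refine iInf_le_of_le (ε:ℝ) (iInf_le_of_le (by exact_mod_cast hε) ?_)
            exact iInf_le _ hprop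
        _ = (ε : ℝ≥0∞) := ENNReal.ofReal_coe_nnreal
    rw [h0, ENNReal.zero_rpow_of_pos hr0]
  · refine ENNReal.le_of_forall_pos_le_add fun ε hε hfinsum => ?_
    set ti : Fin n → ℝ := fun i => (tauNorm μ p (ξ i)).toReal with hti
    have hofti : ∀ i, ENNReal.ofReal (ti i) = tauNorm μ p (ξ i) := fun i =>
      ofReal_toReal (hfin i).ne
    set δ : ℝ := (ε:ℝ) / n with hδdef
    have hn' : (0:ℝ) < n := by exact_mod_cast hn
    have hδ : 0 < δ := div_pos (by exact_mod_cast hε) hn'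
    have hchoice : ∀ i, ∃ Ki : ℝ, 0 < Ki ∧
        (∀ t : ℝ, ∫⁻ ω, ENNReal.ofReal (Real.exp (t * ξ i ω)) ∂μ ≤
          ENNReal.ofReal (Real.exp (phi (p / (p - 1)) (Ki * t)))) ∧
        Ki ^ r ≤ ti i ^ r + δ := by
      intro i
      have htinn : 0 ≤ ti i := toReal_nonneg
      set ci : ℝ := (ti i ^ r + δ) ^ (1/r) with hci_def
      have hci : ti i < ci := by
        conv_lhs => rw [show ti i = (ti i ^ r) ^ (1/r) by
          rw [one_div, Real.rpow_rpow_inv htinn hr1]]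
        exact Real.rpow_lt_rpow (Real.rpow_nonneg htinn r)
          (lt_add_of_pos_right _ hδ) (by positivity)
      have hlt : tauNorm μ p (ξ i) < ENNReal.ofReal ci := by
        rw [← hofti i]
        exact (ENNReal.ofReal_lt_ofReal_iff (lt_of_le_of_lt htinn hci)).2 hci
      rw [tauNorm] at hlt
      simp only [iInf_lt_iff] at hlt
      obtain ⟨Ki, hKi0, hKiprop, hKilt⟩ := hlt
      refine ⟨Ki, hKi0, hKiprop, ?_⟩
      have hKici : Ki < ci := by
        rwa [ENNReal.ofReal_lt_ofReal_iff_of_nonneg hKi0.le] at hKilt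
      calc Ki ^ r ≤ ci ^ r := Real.rpow_le_rpow hKi0.le hKici.le hr0.le
        _ = ti i ^ r + δ := by rw [hci_def, one_div, Real.rpow_inv_rpow (by positivity) hr1]
    choose K hK0 hKprop hKle using hchoice
    have hsumnn : (0:ℝ) ≤ ∑ i, K i ^ r :=
      Finset.sum_nonneg fun i _ => Real.rpow_nonneg (hK0 i).le r
    set K0 : ℝ := (∑ i, K i ^ r) ^ (1/r) with hK0def
    have hK0pos : 0 < K0 := by
      have : Nonempty (Fin n) := ⟨⟨0, hn⟩⟩
      exact Real.rpow_pos_of_pos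
        (Finset.sum_pos (fun i _ => Real.rpow_pos_of_pos (hK0 i) r) Finset.univ_nonempty) _
    have hbound := key_bound μ hq1 hr ξ hmeas hindep K hK0 hKprop
    have hle : tauNorm μ p (fun ω => ∑ i, ξ i ω) ≤ ENNReal.ofReal K0 := by
      refine iInf_le_of_le K0 (iInf_le_of_le hK0pos ?_)
      exact iInf_le _ hbound
    calc (tauNorm μ p (fun ω => ∑ i, ξ i ω)) ^ r ≤ (ENNReal.ofReal K0) ^ r :=
          ENNReal.rpow_le_rpow hle hr0.le
      _ = ENNReal.ofReal (K0 ^ r) := ENNReal.ofReal_rpow_of_nonneg hK0pos.le hr0.le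
      _ = ENNReal.ofReal (∑ i, K i ^ r) := by
          rw [hK0def, one_div, Real.rpow_inv_rpow hsumnn hr1]
      _ ≤ ENNReal.ofReal (∑ i, (ti i ^ r + δ)) :=
          ENNReal.ofReal_le_ofReal (Finset.sum_le_sum fun i _ => hKle i)
      _ = ∑ i, ENNReal.ofReal (ti i ^ r + δ) :=
          ENNReal.ofReal_sum_of_nonneg fun i _ => by positivity
      _ = ∑ i, (ENNReal.ofReal (ti i ^ r) + ENNReal.ofReal δ) :=
          Finset.sum_congr rfl fun i _ => ENNReal.ofReal_add (by positivity) hδ.le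
      _ = ∑ i, ENNReal.ofReal (ti i ^ r) + ∑ _i : Fin n, ENNReal.ofReal δ :=
          Finset.sum_add_distrib
      _ ≤ ∑ i, (tauNorm μ p (ξ i)) ^ r + ε := by
          gcongr with i
          · rw [← ENNReal.ofReal_rpow_of_nonneg toReal_nonneg hr0.le, hofti]
          · rw [Finset.sum_const, Finset.card_univ, Fintype.card_fin, nsmul_eq_mul]
            rw [← ENNReal.ofReal_natCast n, ← ENNReal.ofReal_mul (by positivity)]
            rw [show (n:ℝ) * δ = (ε:ℝ) by rw [hδdef]; field_simp]
            exact le_of_eq ENNReal.ofReal_coe_nnreal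
end
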